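/- arXiv:1407.4089 — 8 statements merged into one kernel-verified Lean document; each statement's English description precedes it below -/
import Mathlib

section
/- If η : ℝ → ℝ is arbitrary, K : ℝ → ℝ is injective, ∘_σ is a commutative binary operation on ℝ, and K(x + y·η(x)) = K(x) ∘_σ K(y) for all x, y ∈ ℝ, then there is a constant ρ ∈ ℝ with η(u) = 1 + ρu for all u ∈ ℝ. -/
/-- Lemma 1 (commutative case): if K is injective, ∘_σ is commutative and
    K(x + y·η(x)) = K(x) ∘_σ K(y) for all x, y, then η(u) = 1 + ρu for some ρ. -/
theorem lemma1_com (K : ℝ → ℝ) (σ : ℝ → ℝ → ℝ) (η : ℝ → ℝ)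
    (hK : Function.Injective K)
    (hcomm : ∀ u v : ℝ, σ u v = σ v u)
    (heq : ∀ x y : ℝ, K (x + y * η x) = σ (K x) (K y)) :
    ∃ ρ : ℝ, ∀ u : ℝ, η u = 1 + ρ * u := by
  have key : ∀ x y : ℝ, x + y * η x = y + x * η y := fun x y =>
    hK (((heq x y).trans (hcomm _ _)).trans (heq y x).symm)
  refine ⟨η 1 - 1, fun u => ?_⟩
  have h := key u 1
  linarith
end

section
/- If K : ℝ → ℝ is injective, ∘_σ is an associative binary operation on ℝ, η : ℝ → ℝ is arbitrary, and K(x + y·η(x)) = K(x) ∘_σ K(y) holds for all x, y ∈ ℝ, then the operation x ∘_η y := x + y·η(x) is associative, and consequently η satisfies the Gołąb–Schinzel equation η(x + y·η(x)) = η(x)·η(y) whenever η is nowhere zero. -/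
/-- Lemma 1 (associative case): if K is injective, ∘_σ is associative and
    K(x + y·η(x)) = K(x) ∘_σ K(y) for all x, y, then ∘_η is associative,
    and η satisfies the Gołąb–Schinzel equation whenever η is nowhere zero. -/
theorem lemma1_assoc (K : ℝ → ℝ) (σ : ℝ → ℝ → ℝ) (η : ℝ → ℝ)
    (hK : Function.Injective K)
    (hassoc : ∀ u v w : ℝ, σ (σ u v) w = σ u (σ v w))
    (heq : ∀ x y : ℝ, K (x + y * η x) = σ (K x) (K y)) :
    (∀ x y z : ℝ, (x + y * η x) + z * η (x + y * η x)
        = x + (y + z * η y) * η x) ∧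
    ((∀ x : ℝ, η x ≠ 0) → ∀ x y : ℝ, η (x + y * η x) = η x * η y) := by
  have ha : ∀ x y z : ℝ, (x + y * η x) + z * η (x + y * η x)
      = x + (y + z * η y) * η x := by
    intro x y z
    apply hK
    rw [heq, heq, hassoc, ← heq, ← heq]
  refine ⟨ha, fun _ x y => ?_⟩
  have h := ha x y 1
  nlinarith [h]
end

section
/- If K, ψ, κ satisfy K(x + y·η(x)) − K(y) = ψ(y)·κ(x) for all x, y with η(0) = 1 and ψ(0) ≠ 0, then κ(0) = 0 and κ satisfies κ(x + y·η(x)) = κ(y) + κ(x)·ψ(y)/ψ(0) for all x, y. -/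
/-- For the Pexiderized Goldie–Beurling equation with η(0) = 1 and ψ(0) ≠ 0:
    κ(0) = 0 and κ(x + y·η(x)) = κ(y) + κ(x)·ψ(y)/ψ(0). -/
theorem GBEP_kappa (η K ψ κ : ℝ → ℝ)
    (hη0 : η 0 = 1)
    (heq : ∀ x y : ℝ, K (x + y * η x) - K y = ψ y * κ x)
    (hψ0 : ψ 0 ≠ 0) :
    κ 0 = 0 ∧ ∀ x y : ℝ, κ (x + y * η x) = κ y + κ x * ψ y / ψ 0 := by
  have h0 := heq 0 0
  simp [hη0] at h0
  have hk0 : κ 0 = 0 := h0.resolve_left hψ0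
  refine ⟨hk0, fun x y => ?_⟩
  have hx : ∀ z, κ z = (K z - K 0) / ψ 0 := by
    intro z
    have h := heq z 0
    simp at h
    field_simp
    linarith [h]
  rw [hx (x + y * η x), hx y,
    show K (x + y * η x) = K y + ψ y * κ x from by linarith [heq x y]]
  ring
end

section
/- Suppose K, ψ, κ satisfy K(x + y·η(x)) − K(y) = ψ(y)·κ(x) for all x, y, where η is such that x ∘_η y := x + y·η(x) is commutative, ψ(0) ≠ 0, and κ(x) ≠ 0 for all x > 0. Then there is s ∈ ℝ such that ψ(x)/ψ(0) = 1 + s·κ(x) for all x > 0. -/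
/-- Lemma 2: for the Pexiderized Goldie–Beurling equation with η(x) = 1 + ρx,
    ψ(0) ≠ 0 and κ nonvanishing on (0, ∞), there is s with
    ψ(x)/ψ(0) = 1 + s·κ(x) for all x > 0. -/
theorem GBEP_lemma2 (ρ : ℝ) (K ψ κ : ℝ → ℝ)
    (heq : ∀ x y : ℝ, K (x + y * (1 + ρ * x)) - K y = ψ y * κ x)
    (hψ0 : ψ 0 ≠ 0)
    (hκ : ∀ x : ℝ, 0 < x → κ x ≠ 0) :
    ∃ s : ℝ, ∀ x : ℝ, 0 < x → ψ x / ψ 0 = 1 + s * κ x := by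
  have hK0 : ∀ x : ℝ, K x - K 0 = ψ 0 * κ x := by
    intro x; have := heq x 0; simpa using this
  have hsym : ∀ x y : ℝ, ψ y * κ x + K y = ψ x * κ y + K x := by
    intro x y
    have h1 := heq x y
    have h2 := heq y x
    have hcomm : x + y * (1 + ρ * x) = y + x * (1 + ρ * y) := by ring
    rw [hcomm] at h1
    linarith
  refine ⟨(ψ 1 - ψ 0) / κ 1 / ψ 0, ?_⟩
  intro x hx
  have hκ1 : κ 1 ≠ 0 := hκ 1 one_pos
  have hκx : κ x ≠ 0 := hκ x hx
  have h1 := hsym x 1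
  have hKx := hK0 x
  have hK1 := hK0 1
  -- ψ 1 * κ x - ψ 0 * κ x = ψ x * κ 1 - ψ 0 * κ 1
  have key : (ψ 1 - ψ 0) * κ x = (ψ x - ψ 0) * κ 1 := by nlinarith [h1, hKx, hK1]
  field_simp
  linear_combination (-1 : ℝ) * key
end

section
/- Let α, β : ℝ → ℝ be functions with α injective, and define x ∘ y := α(x) + y·β(x). If ∘ is associative, then β(x ∘ y) = β(x)·β(y) and α(x ∘ y) = α(x) + α(y)·β(x) for all x, y ∈ ℝ. -/
/-- If x ∘ y := α(x) + y·β(x) is associative with α injective, then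
    β(x ∘ y) = β(x)·β(y) and α(x ∘ y) = α(x) + α(y)·β(x). -/
theorem propC_step (α β : ℝ → ℝ)
    (hα : Function.Injective α)
    (hassoc : ∀ x y z : ℝ,
      α (α x + y * β x) + z * β (α x + y * β x)
        = α x + (α y + z * β y) * β x) :
    ∀ x y : ℝ, β (α x + y * β x) = β x * β y ∧
      α (α x + y * β x) = α x + α y * β x := by
  intro x y
  have h0 := hassoc x y 0
  simp at h0
  refine ⟨?_, h0⟩
  linear_combination hassoc x y 1 - h0
end

section
/- Let α, β : ℝ → ℝ be continuous with α injective, and suppose x ∘ y := α(x) + y·β(x) makes ℝ into a group containing 0. Then there exist constants b, c ∈ ℝ with b·c = 0 such that α(x) = x + b and β(x) = 1 + c(x + b) for all x; i.e., either (ℝ, ∘) is a Popa group x ∘ y = x + y(1 + cx), or the b-shifted additive group x ∘ y = x + y + b. -/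
/-- Proposition C: if α, β are continuous, α injective, and
    x ∘ y := α(x) + y·β(x) makes ℝ a group, then for some constants b, c with
    bc = 0 we have α(x) = x + b and β(x) = 1 + c(x + b): the group is either a
    Popa group or the b-shifted additive reals. -/
theorem propC (α β : ℝ → ℝ)
    (hαc : Continuous α) (hβc : Continuous β)
    (hα : Function.Injective α)
    (hassoc : ∀ x y z : ℝ,
      α (α x + y * β x) + z * β (α x + y * β x)
        = α x + (α y + z * β y) * β x)
    (hgroup : ∃ e : ℝ, (∀ x : ℝ, α e + x * β e = x ∧ α x + e * β x = x) ∧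
      ∀ x : ℝ, ∃ y : ℝ, α x + y * β x = e ∧ α y + x * β y = e) :
    ∃ b c : ℝ, b * c = 0 ∧ (∀ x : ℝ, α x = x + b) ∧
      (∀ x : ℝ, β x = 1 + c * (x + b)) := by
  obtain ⟨e, hid, hinv⟩ := hgroup
  have hαe : α e = 0 := by have := (hid 0).1; linarith
  have hβe : β e = 1 := by have := (hid 1).1; linarith
  have hβ : ∀ a, β a = 1 := by
    intro a
    by_contra hne
    have h1 : 1 - β a ≠ 0 := by intro h; apply hne; linarith
    set p := α a / (1 - β a) with hp
    have hap : α a + p * β a = p := by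
      rw [hp]; field_simp; ring
    obtain ⟨q, hq1, hq2⟩ := hinv p
    have key := hassoc a p q
    rw [hap, hq1] at key
    have h2 := (hid a).2
    have ha : a = e := by linarith
    rw [ha, hβe] at hne
    exact hne rfl
  refine ⟨-e, 0, by ring, fun x => ?_, fun x => by rw [hβ]; ring⟩
  have h2 := (hid x).2
  rw [hβ] at h2
  linarith
end

section
/- Let ρ ≥ 0, η(x) := 1 + ρx, and let f : ℝ → ℝ be continuous, positive on [0, ∞), and satisfy f(x + y·η(x)) = f(x)·f(y) for all x, y ≥ 0 with η(x) > 0. Define τ_f(x) := ∫₀ˣ dt/f(t), ψ(x) := η(x)/f(x), and K := τ_f. Then K solves the Pexiderized Goldie–Beurling equation K(v + u·η(v)) − K(v) = ψ(v)·τ_f(u) for all u, v ≥ 0 with η(v) > 0. -/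
open intervalIntegral in
/-- Proposition D: if f is continuous, positive on [0,∞) and satisfies
    f(x + y·η(x)) = f(x)·f(y) with η(x) = 1 + ρx, ρ ≥ 0, then
    K := τ_f, where τ_f(x) = ∫₀ˣ dt/f(t), solves the Pexiderized
    Goldie–Beurling equation with auxiliaries ψ := η/f and κ := τ_f. -/
theorem propD (ρ : ℝ) (hρ : 0 ≤ ρ) (f : ℝ → ℝ)
    (hf : Continuous f)
    (hfpos : ∀ x : ℝ, 0 ≤ x → 0 < f x)
    (hCBE : ∀ x y : ℝ, 0 ≤ x → 0 ≤ y → 0 < 1 + ρ * x →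
      f (x + y * (1 + ρ * x)) = f x * f y) :
    ∀ u v : ℝ, 0 ≤ u → 0 ≤ v → 0 < 1 + ρ * v →
      (∫ t in (0:ℝ)..(v + u * (1 + ρ * v)), 1 / f t)
          - (∫ t in (0:ℝ)..v, 1 / f t)
        = ((1 + ρ * v) / f v) * ∫ t in (0:ℝ)..u, 1 / f t := by
  intro u v hu hv hη
  set c : ℝ := 1 + ρ * v with hc_def
  have hc : c ≠ 0 := ne_of_gt hη
  have hcu : 0 ≤ u * c := mul_nonneg hu (le_of_lt hη)
  -- integrability of 1/f on [0, b] for b ≥ 0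
  have hint : ∀ b : ℝ, 0 ≤ b → IntervalIntegrable (fun t => 1 / f t) MeasureTheory.volume 0 b := by
    intro b hb
    apply ContinuousOn.intervalIntegrable
    rw [Set.uIcc_of_le hb]
    exact ContinuousOn.div continuousOn_const hf.continuousOn
      (fun x hx => (hfpos x hx.1).ne')
  have h1 : (∫ t in (0:ℝ)..(v + u * c), 1 / f t) - (∫ t in (0:ℝ)..v, 1 / f t)
      = ∫ t in v..(v + u * c), 1 / f t := by
    apply intervalIntegral.integral_interval_sub_left
    · exact hint _ (by linarith)
    · exact hint _ hv
  have hsub : (∫ t in (0:ℝ)..u, 1 / f (c * t + v))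
      = c⁻¹ • ∫ x in (c * 0 + v)..(c * u + v), 1 / f x :=
    intervalIntegral.integral_comp_mul_add (fun x => 1 / f x) hc v
  have h2 : (∫ t in (0:ℝ)..u, 1 / f (c * t + v))
      = ∫ t in (0:ℝ)..u, (1 / f v) * (1 / f t) := by
    apply intervalIntegral.integral_congr
    intro t ht
    rw [Set.uIcc_of_le hu] at ht
    have hc2 := hCBE v t hv ht.1 hη
    show 1 / f (c * t + v) = 1 / f v * (1 / f t)
    rw [show c * t + v = v + t * (1 + ρ * v) by rw [hc_def]; ring, hc2]
    rw [one_div, mul_inv, one_div, one_div]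
  rw [h1]
  have h3 : (∫ x in v..(v + u * c), 1 / f x) = c * ∫ t in (0:ℝ)..u, 1 / f (c * t + v) := by
    rw [hsub, smul_eq_mul, ← mul_assoc, mul_inv_cancel₀ hc, one_mul]
    congr 1 <;> ring
  rw [h3, h2, intervalIntegral.integral_const_mul]
  field_simp
end

section
/- Suppose K, ψ, κ : ℝ → ℝ with K differentiable, κ differentiable, η(x) = 1 + ρx, η(0) = 1, and K(x + y·η(x)) − K(y) = ψ(y)·κ(x) for all x, y. Then K′(y)·η(y) = ψ(y)·κ′(0) and K′(x) = ψ(0)·κ′(x) for all x, y; hence if ψ(0)·κ′(0) ≠ 0, then K′(x)/K′(0) = κ′(x)/κ′(0) for all x. -/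
/-- Lemma 5 (derivative identities): if K, κ are differentiable and satisfy the
    Pexiderized Goldie–Beurling equation with η(x) = 1 + ρx, then
    K′(y)·η(y) = ψ(y)·κ′(0), K′(x) = ψ(0)·κ′(x), and if ψ(0)·κ′(0) ≠ 0 then
    K′(x)/K′(0) = κ′(x)/κ′(0). -/
theorem lemma5_derivs (ρ : ℝ) (K ψ κ : ℝ → ℝ)
    (hK : Differentiable ℝ K) (hκ : Differentiable ℝ κ)
    (heq : ∀ x y : ℝ, K (x + y * (1 + ρ * x)) - K y = ψ y * κ x) :
    (∀ y : ℝ, deriv K y * (1 + ρ * y) = ψ y * deriv κ 0) ∧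
    (∀ x : ℝ, deriv K x = ψ 0 * deriv κ x) ∧
    (ψ 0 * deriv κ 0 ≠ 0 →
      ∀ x : ℝ, deriv K x / deriv K 0 = deriv κ x / deriv κ 0) := by
  have h1 : ∀ y : ℝ, deriv K y * (1 + ρ * y) = ψ y * deriv κ 0 := by
    intro y
    have hfun : (fun x : ℝ => K (y + (1 + ρ * y) * x)) =
        fun x : ℝ => ψ y * κ x + K y := by
      funext x
      have harg : y + (1 + ρ * y) * x = x + y * (1 + ρ * x) := by ring
      rw [harg]
      linarith [heq x y]
    have hl : deriv (fun x : ℝ => K (y + (1 + ρ * y) * x)) 0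
        = deriv K y * (1 + ρ * y) := by
      have := (hK (y + (1 + ρ * y) * 0)).hasDerivAt.comp 0
        (((hasDerivAt_id (0:ℝ)).const_mul (1 + ρ * y)).const_add y)
      simp at this
      simpa [mul_comm, Function.comp_def] using this.deriv
    have hr : deriv (fun x : ℝ => ψ y * κ x + K y) 0 = ψ y * deriv κ 0 := by
      simp [deriv_add_const, deriv_const_mul _ (hκ 0)]
    rw [← hl, hfun, hr]
  have h2 : ∀ x : ℝ, deriv K x = ψ 0 * deriv κ x := by
    intro x
    have hfun : K = fun x : ℝ => ψ 0 * κ x + K 0 := by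
      funext z
      have := heq z 0
      simp at this
      linarith
    rw [hfun]
    simp [deriv_add_const, deriv_const_mul _ (hκ x)]
  refine ⟨h1, h2, fun hne x => ?_⟩
  have hψ : ψ 0 ≠ 0 := fun h => hne (by simp [h])
  rw [h2 x, h2 0, mul_div_mul_left _ _ hψ]
end
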